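/- Let n ≥ 2, let a_1, …, a_{n−1}, q_1, …, q_{n−1}, x_1, …, x_{n−1}, x_n, b, w_n be positive real numbers with 1 − Σ_{l=1}^{n−1} x_l/q_l > 0, and let J be the (2n−1)×(2n−1) real matrix in block form J = [[O, A, 0], [R, −b w_n I, 0], [r, 0, −b w_n]] with O the zero matrix, A = −w_n diag(a_1, …, a_{n−1}), R the (n−1)×(n−1) matrix with diagonal entries q_j − x_j and off-diagonal entries −x_j in row j, I the identity of order n−1, and r the row vector with all entries −x_n. Then there exist real numbers 0 < ξ_1 ≤ ξ_2 ≤ … ≤ ξ_{n−1}, independent of w_n, such that det(zI_{2n−1} − J) = (z + b w_n) ∏_{k=1}^{n−1}(z² + b w_n z + ξ_k w_n) for all z. -/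

import Mathlib

open Matrix

section Aux
variable {m : Type*} [Fintype m] [DecidableEq m]



/-- Determinant of a 2×2 block matrix whose lower-right block is scalar. -/
lemma det_fromBlocks_smul_one' (A B C : Matrix m m ℝ) (d : ℝ) :
    (Matrix.fromBlocks A B C (d • (1 : Matrix m m ℝ))).det = (d • A - B * C).det := by
  have hf : Continuous fun d : ℝ =>
      (Matrix.fromBlocks A B C (d • (1 : Matrix m m ℝ))).det := by
    refine Continuous.matrix_det (continuous_matrix fun i j => ?_)
    rcases i with i | i <;> rcases j with j | j <;>
      simp only [Matrix.fromBlocks_apply₁₁, Matrix.fromBlocks_apply₁₂,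
        Matrix.fromBlocks_apply₂₁, Matrix.fromBlocks_apply₂₂, Matrix.smul_apply,
        smul_eq_mul] <;> fun_prop
  have hg : Continuous fun d : ℝ => (d • A - B * C).det := by
    refine Continuous.matrix_det (continuous_matrix fun i j => ?_)
    simp only [Matrix.sub_apply, Matrix.smul_apply, smul_eq_mul]
    fun_prop
  have key : (fun d : ℝ => (Matrix.fromBlocks A B C (d • (1 : Matrix m m ℝ))).det)
      = fun d : ℝ => (d • A - B * C).det := by
    refine Continuous.ext_on (dense_compl_singleton (0 : ℝ)) hf hg ?_
    intro d hd
    have hd0 : d ≠ 0 := hd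
    show (Matrix.fromBlocks A B C (d • (1 : Matrix m m ℝ))).det = (d • A - B * C).det
    haveI : Invertible (d • (1 : Matrix m m ℝ)) :=
      ⟨d⁻¹ • (1 : Matrix m m ℝ),
        by rw [Matrix.smul_mul, Matrix.mul_smul, one_mul, smul_smul,
          inv_mul_cancel₀ hd0, one_smul],
        by rw [Matrix.smul_mul, Matrix.mul_smul, one_mul, smul_smul,
          mul_inv_cancel₀ hd0, one_smul]⟩
    have hinv : ⅟ (d • (1 : Matrix m m ℝ)) = d⁻¹ • (1 : Matrix m m ℝ) :=
      invOf_eq_right_inv (by rw [Matrix.smul_mul, Matrix.mul_smul, one_mul, smul_smul,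
        mul_inv_cancel₀ hd0, one_smul])
    rw [Matrix.det_fromBlocks₂₂, hinv]
    have h1 : A - B * (d⁻¹ • (1 : Matrix m m ℝ)) * C = A - d⁻¹ • (B * C) := by
      rw [Matrix.mul_smul, Matrix.mul_one, Matrix.smul_mul]
    rw [h1, Matrix.det_smul, Matrix.det_one, mul_one, ← Matrix.det_smul]
    congr 1
    rw [smul_sub, smul_smul, mul_inv_cancel₀ hd0, one_smul]
  exact congrFun key d

/-- Spectral determinant formula. -/
lemma det_smul_one_add_smul {S : Matrix m m ℝ} (hS : S.IsHermitian) (y c : ℝ) :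
    (y • (1 : Matrix m m ℝ) + c • S).det = ∏ k, (y + c * hS.eigenvalues k) := by
  set U : Matrix m m ℝ := (hS.eigenvectorUnitary : Matrix m m ℝ) with hU_def
  have hU : U * star U = 1 := (Matrix.mem_unitaryGroup_iff).mp hS.eigenvectorUnitary.2
  have h1 : y • (1 : Matrix m m ℝ) + c • S
      = U * (y • (1 : Matrix m m ℝ) + c • Matrix.diagonal hS.eigenvalues) * star U := by
    have hsp := hS.spectral_theorem
    rw [RCLike.ofReal_real_eq_id] at hsp
    simp only [Function.id_comp, Unitary.conjStarAlgAut_apply] at hsp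
    rw [Matrix.mul_add, Matrix.add_mul, Matrix.mul_smul, Matrix.smul_mul,
      Matrix.mul_one, hU, Matrix.mul_smul, Matrix.smul_mul, ← hsp]
  rw [h1, Matrix.det_mul, Matrix.det_mul, mul_comm (Matrix.det U), mul_assoc,
    ← Matrix.det_mul, hU, Matrix.det_one, mul_one]
  have h2 : y • (1 : Matrix m m ℝ) + c • Matrix.diagonal hS.eigenvalues
      = Matrix.diagonal fun k => y + c * hS.eigenvalues k := by
    ext i j
    simp only [Matrix.add_apply, Matrix.smul_apply, Matrix.one_apply,
      Matrix.diagonal_apply, smul_eq_mul]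
    split_ifs with h
    · ring
    · ring
  rw [h2, Matrix.det_diagonal]

/-- Conjugating the rank-one perturbation to symmetric form. -/
lemma det_rankone_conj (μ u : m → ℝ) (hu : ∀ k, u k ≠ 0) (w : ℝ) :
    (Matrix.diagonal μ - w • Matrix.vecMulVec (fun k => u k ^ 2) (fun _ => (1 : ℝ))).det
      = (Matrix.diagonal μ - w • Matrix.vecMulVec u u).det := by
  set D : Matrix m m ℝ := Matrix.diagonal u with hD_def
  have hDdet : D.det ≠ 0 := by
    rw [hD_def, Matrix.det_diagonal]
    exact Finset.prod_ne_zero_iff.2 fun k _ => hu k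
  have hcomm : (Matrix.diagonal μ - w • Matrix.vecMulVec (fun k => u k ^ 2)
        (fun _ => (1 : ℝ))) * D
      = D * (Matrix.diagonal μ - w • Matrix.vecMulVec u u) := by
    ext i j
    rw [hD_def, Matrix.mul_diagonal, Matrix.diagonal_mul]
    by_cases hij : i = j
    · subst hij
      simp only [Matrix.sub_apply, Matrix.smul_apply, Matrix.diagonal_apply_eq,
        Matrix.vecMulVec_apply, smul_eq_mul]
      ring
    · simp only [Matrix.sub_apply, Matrix.smul_apply, Matrix.diagonal_apply_ne _ hij,
        Matrix.vecMulVec_apply, smul_eq_mul]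
      ring
  have hdet := congrArg Matrix.det hcomm
  rw [Matrix.det_mul, Matrix.det_mul] at hdet
  rw [mul_comm] at hdet
  exact mul_left_cancel₀ hDdet hdet

lemma dot_rankone (c u v : m → ℝ) :
    v ⬝ᵥ ((Matrix.diagonal c - Matrix.vecMulVec u u) *ᵥ v)
      = (∑ k, c k * v k ^ 2) - (∑ k, u k * v k) ^ 2 := by
  rw [Matrix.sub_mulVec, dotProduct_sub]
  congr 1
  · simp [dotProduct, Matrix.mulVec_diagonal, sq]
    exact Finset.sum_congr rfl fun k _ => by ring
  · simp only [dotProduct, Matrix.mulVec, Matrix.vecMulVec_apply, sq, Finset.sum_mul,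
      Finset.mul_sum]
    rw [Finset.sum_comm]
    exact Finset.sum_congr rfl fun i _ => Finset.sum_congr rfl fun j _ => by ring
end Aux

/-- There exist `0 < ξ₁ ≤ … ≤ ξ_{n-1}`, independent of `wₙ`, such that the
characteristic polynomial of the Jacobian `J(wₙ)` factors as
`det(zI - J) = (z + b wₙ) ∏ₖ (z² + b wₙ z + ξₖ wₙ)` for every `wₙ > 0`. -/
theorem stmt_11 (n : ℕ) (hn : 2 ≤ n)
    (a q x : Fin (n - 1) → ℝ) (xn b : ℝ)
    (ha : ∀ k, 0 < a k) (hq : ∀ k, 0 < q k) (hx : ∀ k, 0 < x k)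
    (hxn : 0 < xn) (hb : 0 < b)
    (hpos : 0 < 1 - ∑ l, x l / q l)
    (J : ℝ → Matrix (Fin (n - 1) ⊕ (Fin (n - 1) ⊕ Unit))
      (Fin (n - 1) ⊕ (Fin (n - 1) ⊕ Unit)) ℝ)
    (hJ : ∀ wn, J wn = Matrix.of fun i j =>
      match i, j with
      | Sum.inl _, Sum.inl _ => 0
      | Sum.inl i, Sum.inr (Sum.inl j) => if i = j then -(wn * a i) else 0
      | Sum.inl _, Sum.inr (Sum.inr _) => 0
      | Sum.inr (Sum.inl i), Sum.inl j => if i = j then q i - x i else -x i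
      | Sum.inr (Sum.inl i), Sum.inr (Sum.inl j) => if i = j then -(b * wn) else 0
      | Sum.inr (Sum.inl _), Sum.inr (Sum.inr _) => 0
      | Sum.inr (Sum.inr _), Sum.inl _ => -xn
      | Sum.inr (Sum.inr _), Sum.inr (Sum.inl _) => 0
      | Sum.inr (Sum.inr _), Sum.inr (Sum.inr _) => -(b * wn)) :
    ∃ ξ : Fin (n - 1) → ℝ, (∀ k, 0 < ξ k) ∧ Monotone ξ ∧
      ∀ wn : ℝ, 0 < wn → ∀ z : ℝ,
        (z • (1 : Matrix (Fin (n - 1) ⊕ (Fin (n - 1) ⊕ Unit))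
            (Fin (n - 1) ⊕ (Fin (n - 1) ⊕ Unit)) ℝ) - J wn).det =
          (z + b * wn) * ∏ k, (z ^ 2 + b * wn * z + ξ k * wn) := by
  classical
  -- the symmetrized matrix
  set u : Fin (n - 1) → ℝ := fun k => Real.sqrt (a k * x k) with hu_def
  have hax : ∀ k, (0 : ℝ) < a k * x k := fun k => mul_pos (ha k) (hx k)
  have haq : ∀ k, (0 : ℝ) < a k * q k := fun k => mul_pos (ha k) (hq k)
  have hu : ∀ k, 0 < u k := fun k => Real.sqrt_pos.2 (hax k)
  have hu2 : ∀ k, u k ^ 2 = a k * x k := fun k => Real.sq_sqrt (hax k).le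
  set S : Matrix (Fin (n - 1)) (Fin (n - 1)) ℝ :=
    Matrix.diagonal (fun k => a k * q k) - Matrix.vecMulVec u u with hS_def
  have hS : S.IsHermitian := by
    ext i j
    simp only [hS_def, Matrix.conjTranspose_apply, Matrix.sub_apply,
      Matrix.diagonal_apply, Matrix.vecMulVec_apply, star_trivial]
    by_cases h : i = j
    · subst h; ring
    · rw [if_neg h, if_neg fun hji => h hji.symm, mul_comm]
  have hSpd : S.PosDef := by
    refine Matrix.PosDef.of_dotProduct_mulVec_pos hS fun v hv => ?_
    rw [star_trivial, dot_rankone]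
    obtain ⟨i0, hi0⟩ : ∃ i, v i ≠ 0 := by
      by_contra h
      push_neg at h
      exact hv (funext h)
    have hT : 0 < ∑ k, a k * q k * v k ^ 2 := by
      refine Finset.sum_pos' (fun k _ => mul_nonneg (haq k).le (sq_nonneg _)) ⟨i0, Finset.mem_univ _, ?_⟩
      exact mul_pos (haq i0) (pow_two_pos_of_ne_zero hi0)
    have hcs : (∑ k, u k * v k) ^ 2
        ≤ (∑ k, x k / q k) * ∑ k, a k * q k * v k ^ 2 := by
      have h := Finset.sum_mul_sq_le_sq_mul_sq Finset.univ
        (fun k => u k / Real.sqrt (a k * q k)) (fun k => Real.sqrt (a k * q k) * v k)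
      have h1 : ∀ k : Fin (n - 1), u k / Real.sqrt (a k * q k) * (Real.sqrt (a k * q k) * v k)
          = u k * v k := fun k => by
        have hs : Real.sqrt (a k * q k) ≠ 0 := (Real.sqrt_pos.2 (haq k)).ne'
        field_simp
      have h2 : ∀ k : Fin (n - 1), (u k / Real.sqrt (a k * q k)) ^ 2 = x k / q k := fun k => by
        rw [div_pow, hu2, Real.sq_sqrt (haq k).le,
          mul_div_mul_left (x k) (q k) (ha k).ne']
      have h3 : ∀ k : Fin (n - 1), (Real.sqrt (a k * q k) * v k) ^ 2 = a k * q k * v k ^ 2 :=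
        fun k => by rw [mul_pow, Real.sq_sqrt (haq k).le]
      calc (∑ k, u k * v k) ^ 2
          = (∑ k, u k / Real.sqrt (a k * q k) * (Real.sqrt (a k * q k) * v k)) ^ 2 := by
            rw [Finset.sum_congr rfl fun k _ => (h1 k).symm]
        _ ≤ (∑ k, (u k / Real.sqrt (a k * q k)) ^ 2)
            * ∑ k, (Real.sqrt (a k * q k) * v k) ^ 2 := h
        _ = (∑ k, x k / q k) * ∑ k, a k * q k * v k ^ 2 := by
            rw [Finset.sum_congr rfl fun k _ => h2 k,
              Finset.sum_congr rfl fun k _ => h3 k]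
    have hlt : (∑ k, x k / q k) * (∑ k, a k * q k * v k ^ 2)
        < ∑ k, a k * q k * v k ^ 2 := by
      have hxq : (∑ k, x k / q k) < 1 := by linarith
      exact mul_lt_of_lt_one_left hT hxq
    linarith
  set ξ0 : Fin (n - 1) → ℝ := hS.eigenvalues with hξ0_def
  have hξ0 : ∀ k, 0 < ξ0 k := fun k => hSpd.eigenvalues_pos k
  set σ := Tuple.sort ξ0 with hσ_def
  refine ⟨ξ0 ∘ σ, fun k => hξ0 _, Tuple.monotone_sort ξ0, ?_⟩
  intro wn hwn z
  have hprod : ∏ k, (z ^ 2 + b * wn * z + (ξ0 ∘ σ) k * wn)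
      = ∏ k, (z ^ 2 + b * wn * z + ξ0 k * wn) :=
    Equiv.prod_comp σ (fun k => z ^ 2 + b * wn * z + ξ0 k * wn)
  rw [hprod]
  -- block reduction
  set e : (Fin (n - 1) ⊕ Fin (n - 1)) ⊕ Unit ≃ Fin (n - 1) ⊕ (Fin (n - 1) ⊕ Unit) := Equiv.sumAssoc (Fin (n - 1)) (Fin (n - 1)) Unit with he_def
  set C2 : Matrix (Fin (n - 1)) (Fin (n - 1)) ℝ := Matrix.of fun i j => if i = j then x i - q i else x i
    with hC2_def
  set P2 : Matrix (Fin (n - 1) ⊕ Fin (n - 1)) (Fin (n - 1) ⊕ Fin (n - 1)) ℝ :=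
    Matrix.fromBlocks (z • 1) (Matrix.diagonal fun k => wn * a k) C2
      ((z + b * wn) • 1) with hP2_def
  have hre := (Matrix.det_submatrix_equiv_self e
    (z • (1 : Matrix (Fin (n - 1) ⊕ (Fin (n - 1) ⊕ Unit)) (Fin (n - 1) ⊕ (Fin (n - 1) ⊕ Unit)) ℝ) - J wn)).symm
  have hblock : (z • (1 : Matrix (Fin (n - 1) ⊕ (Fin (n - 1) ⊕ Unit)) (Fin (n - 1) ⊕ (Fin (n - 1) ⊕ Unit)) ℝ)
        - J wn).submatrix ⇑e ⇑e
      = Matrix.fromBlocks P2 0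
          (Matrix.of fun (_ : Unit) j => Sum.elim (fun _ => xn) (fun _ => 0) j)
          (Matrix.of fun (_ _ : Unit) => z + b * wn) := by
    ext i j
    rcases i with (i | i) | i <;> rcases j with (j | j) | j <;>
      simp [hJ, he_def, Equiv.sumAssoc, hP2_def, hC2_def, Matrix.one_apply,
        Matrix.diagonal_apply, Matrix.fromBlocks] <;>
      split_ifs <;> ring
  rw [hre, hblock, Matrix.det_fromBlocks_zero₁₂,
    show (Matrix.of fun (_ _ : Unit) => z + b * wn).det = z + b * wn by
      rw [Matrix.det_unique, Matrix.of_apply]]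
  rw [hP2_def, det_fromBlocks_smul_one']
  have hmat : (z + b * wn) • (z • (1 : Matrix (Fin (n - 1)) (Fin (n - 1)) ℝ))
        - (Matrix.diagonal fun k => wn * a k) * C2
      = Matrix.diagonal (fun k => z * (z + b * wn) + wn * (a k * q k))
        - wn • Matrix.vecMulVec (fun k => u k ^ 2) (fun _ => (1 : ℝ)) := by
    ext i j
    simp only [Matrix.sub_apply, Matrix.smul_apply, Matrix.one_apply,
      Matrix.diagonal_mul, Matrix.diagonal_apply, hC2_def, Matrix.of_apply,
      Matrix.vecMulVec_apply, smul_eq_mul, hu2]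
    split_ifs with h
    · ring
    · ring
  rw [hmat, det_rankone_conj _ _ (fun k => (hu k).ne') wn]
  have hstep : Matrix.diagonal (fun k => z * (z + b * wn) + wn * (a k * q k))
        - wn • Matrix.vecMulVec u u
      = (z * (z + b * wn)) • (1 : Matrix (Fin (n - 1)) (Fin (n - 1)) ℝ) + wn • S := by
    rw [hS_def]
    ext i j
    simp only [Matrix.sub_apply, Matrix.add_apply, Matrix.smul_apply, Matrix.one_apply,
      Matrix.diagonal_apply, Matrix.vecMulVec_apply, smul_eq_mul]
    split_ifs with h
    · ring
    · ring
  rw [hstep, det_smul_one_add_smul hS (z * (z + b * wn)) wn]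
  rw [mul_comm]
  congr 1
  exact Finset.prod_congr rfl fun k _ => by ring
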